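/- Under the ellipsoidal-coordinate setup, for every t ∈ I the kinetic energy takes the Stäckel form: (1/2) · Σ_{i=1}^{n+1} (ẋ_i(t))² = −(1/8) · Σ_{k=1}^{n} [ ∏_{j≠k}(λ_k(t) − λ_j(t)) / ∏_{j=1}^{n+1}(λ_k(t) − a_j) ] · λ_k(t) · (λ̇_k(t))², where ẋ_i and λ̇_k denote the derivatives of x_i and λ_k with respect to t. -/

import Mathlib

open Finset

section Aux

open Polynomial

private lemma staeckel_basis_leadingCoeff {ι : Type*} [DecidableEq ι] (s : Finset ι) (v : ι → ℝ)
    (hv : Set.InjOn v s) {i : ι} (hi : i ∈ s) :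
    (Lagrange.basis s v i).coeff (s.card - 1) = (∏ j ∈ s.erase i, (v i - v j))⁻¹ := by
  have hnd := Lagrange.natDegree_basis hv hi
  rw [← hnd, ← Polynomial.leadingCoeff]
  rw [Lagrange.basis, Polynomial.leadingCoeff_prod, ← Finset.prod_inv_distrib]
  refine Finset.prod_congr rfl fun j hj => ?_
  rw [Lagrange.basisDivisor, Polynomial.leadingCoeff_mul, Polynomial.leadingCoeff_C,
    Polynomial.leadingCoeff_X_sub_C, mul_one]

/-- If `deg P ≤ #s - 2`, the Lagrange sum `∑ P(vᵢ)/∏_{j≠i}(vᵢ-vⱼ)` vanishes. -/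
private lemma staeckel_lagrange_sum_zero {ι : Type*} [DecidableEq ι] (s : Finset ι) (v : ι → ℝ)
    (hv : Set.InjOn v s) (P : Polynomial ℝ)
    (hd : P.degree < ((s.card - 1 : ℕ) : ℕ)) :
    ∑ i ∈ s, P.eval (v i) / ∏ j ∈ s.erase i, (v i - v j) = 0 := by
  have hdeg : P.degree < s.card := lt_of_lt_of_le hd (by exact_mod_cast Nat.sub_le _ _)
  have hP := Lagrange.eq_interpolate hv hdeg
  have h0 : P.coeff (s.card - 1) = 0 := Polynomial.coeff_eq_zero_of_degree_lt hd
  rw [hP, Lagrange.interpolate_apply, Polynomial.finset_sum_coeff] at h0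
  rw [← h0]
  refine Finset.sum_congr rfl fun i hi => ?_
  rw [Polynomial.coeff_C_mul, staeckel_basis_leadingCoeff s v hv hi, div_eq_mul_inv]

private lemma staeckel_degree_X_mul_prod {ι : Type*} (T : Finset ι) (c : ι → ℝ) :
    (X * ∏ m ∈ T, (X - C (c m))).degree = ((1 + T.card : ℕ) : WithBot ℕ) := by
  rw [Polynomial.degree_mul, Polynomial.degree_X, Polynomial.degree_prod]
  simp [Polynomial.degree_X_sub_C]

private lemma staeckel_erase_none_univ (α : Type*) [Fintype α] [DecidableEq α] :
    (univ : Finset (Option α)).erase none = univ.map Function.Embedding.some := by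
  ext (_ | x) <;> simp

private lemma staeckel_erase_some_univ {α : Type*} [Fintype α] [DecidableEq α] (i : α) :
    (univ : Finset (Option α)).erase (some i) = insertNone (univ.erase i) := by
  ext (_ | x) <;> simp [eq_comm]

/-- Off-diagonal residue identity: `∑ᵢ ρᵢ/((aᵢ-λₖ)(aᵢ-λₗ)) = 0` for `k ≠ l`. -/
private lemma staeckel_ident_offdiag {n : ℕ} (A : Fin (n + 1) → ℝ) (hA : Function.Injective A)
    (L : Fin n → ℝ) (hLA : ∀ k j, L k ≠ A j) {k l : Fin n} (hkl : k ≠ l) :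
    ∑ i, (A i * (∏ m, (A i - L m)) / (∏ j ∈ univ.erase i, (A i - A j))) /
      ((A i - L k) * (A i - L l)) = 0 := by
  have hn2 : 2 ≤ n := by
    by_contra h
    push_neg at h
    have hk := k.isLt; have hl' := l.isLt
    exact hkl (Fin.ext (by omega))
  have hl : l ∈ univ.erase k := mem_erase.mpr ⟨Ne.symm hkl, mem_univ l⟩
  have hTcard : ((univ.erase k).erase l).card = n - 2 := by
    rw [card_erase_of_mem hl, card_erase_of_mem (mem_univ k), card_univ, Fintype.card_fin]
    omega
  have key := staeckel_lagrange_sum_zero (univ : Finset (Fin (n + 1))) A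
    (Function.Injective.injOn hA) (X * ∏ m ∈ (univ.erase k).erase l, (X - C (L m))) (by
      rw [staeckel_degree_X_mul_prod, hTcard, Nat.cast_lt]
      simp only [card_univ, Fintype.card_fin]
      omega)
  rw [← key]
  refine Finset.sum_congr rfl fun i _ => ?_
  have hev : Polynomial.eval (A i) (X * ∏ m ∈ (univ.erase k).erase l, (X - C (L m)))
      = A i * ∏ m ∈ (univ.erase k).erase l, (A i - L m) := by
    simp [Polynomial.eval_prod]
  rw [hev]
  have hsplit : (∏ m, (A i - L m)) =
      (A i - L k) * ((A i - L l) * ∏ m ∈ (univ.erase k).erase l, (A i - L m)) := by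
    rw [← Finset.mul_prod_erase _ _ (mem_univ k), ← Finset.mul_prod_erase _ _ hl]
  rw [hsplit]
  have hk0 : A i - L k ≠ 0 := sub_ne_zero.mpr (Ne.symm (hLA k i))
  have hl0 : A i - L l ≠ 0 := sub_ne_zero.mpr (Ne.symm (hLA l i))
  have hD0 : (∏ j ∈ univ.erase i, (A i - A j)) ≠ 0 := by
    rw [Finset.prod_ne_zero_iff]
    intro j hj
    exact sub_ne_zero.mpr fun h => (mem_erase.mp hj).1 (hA h.symm)
  field_simp

/-- Diagonal residue identity:
`∑ᵢ ρᵢ/(aᵢ-λₖ)² = -λₖ ∏_{m≠k}(λₖ-λₘ) / ∏ⱼ(λₖ-aⱼ)`. -/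
private lemma staeckel_ident_diag {n : ℕ} (A : Fin (n + 1) → ℝ) (hA : Function.Injective A)
    (L : Fin n → ℝ) (hLA : ∀ k j, L k ≠ A j) (k : Fin n) :
    ∑ i, (A i * (∏ m, (A i - L m)) / (∏ j ∈ univ.erase i, (A i - A j))) /
      ((A i - L k) ^ 2) =
    -(L k * (∏ m ∈ univ.erase k, (L k - L m)) / ∏ j, (L k - A j)) := by
  set v : Option (Fin (n + 1)) → ℝ := fun o => o.elim (L k) A with hv
  have hvinj : Function.Injective v := by
    intro o₁ o₂ h
    match o₁, o₂ with
    | none, none => rfl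
    | none, some j => exact absurd h (hLA k j)
    | some j, none => exact absurd h.symm (hLA k j)
    | some j₁, some j₂ => exact congrArg some (hA h)
  have key := staeckel_lagrange_sum_zero (univ : Finset (Option (Fin (n + 1)))) v
    hvinj.injOn (X * ∏ m ∈ univ.erase k, (X - C (L m))) (by
      rw [staeckel_degree_X_mul_prod, Nat.cast_lt, card_erase_of_mem (mem_univ k)]
      simp only [card_univ, Fintype.card_option, Fintype.card_fin]
      have := k.isLt
      omega)
  rw [Fintype.sum_option] at key
  have hnone : Polynomial.eval (v none) (X * ∏ m ∈ univ.erase k, (X - C (L m))) /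
      ∏ j ∈ univ.erase none, (v none - v j) =
      L k * (∏ m ∈ univ.erase k, (L k - L m)) / ∏ j, (L k - A j) := by
    rw [staeckel_erase_none_univ, Finset.prod_map]
    simp [hv, Polynomial.eval_prod]
  have hsome : ∀ i : Fin (n + 1),
      Polynomial.eval (v (some i)) (X * ∏ m ∈ univ.erase k, (X - C (L m))) /
      ∏ j ∈ univ.erase (some i), (v (some i) - v j) =
      (A i * (∏ m, (A i - L m)) / (∏ j ∈ univ.erase i, (A i - A j))) / ((A i - L k) ^ 2) := by
    intro i
    rw [staeckel_erase_some_univ, Finset.prod_insertNone]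
    have hev : Polynomial.eval (v (some i)) (X * ∏ m ∈ univ.erase k, (X - C (L m)))
        = A i * ∏ m ∈ univ.erase k, (A i - L m) := by
      simp [hv, Polynomial.eval_prod]
    rw [hev]
    have hsplit : (∏ m, (A i - L m)) = (A i - L k) * ∏ m ∈ univ.erase k, (A i - L m) :=
      (Finset.mul_prod_erase _ _ (mem_univ k)).symm
    rw [hsplit]
    have hk0 : A i - L k ≠ 0 := sub_ne_zero.mpr (Ne.symm (hLA k i))
    have hD0 : (∏ j ∈ univ.erase i, (A i - A j)) ≠ 0 := by
      rw [Finset.prod_ne_zero_iff]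
      intro j hj
      exact sub_ne_zero.mpr fun h => (mem_erase.mp hj).1 (hA h.symm)
    have hvnone : v none = L k := rfl
    have hvsome : ∀ j, v (some j) = A j := fun _ => rfl
    simp only [hvnone, hvsome]
    field_simp
  rw [hnone] at key
  rw [Finset.sum_congr rfl (fun i _ => hsome i)] at key
  linarith

private lemma staeckel_aux1 (r s : ℝ) (hr : r ≠ 0) : r ^ 2 * s ^ 2 / (4 * r) = r / 4 * s ^ 2 := by
  field_simp

private lemma staeckel_aux2 (ai Pe d L μ : ℝ) (hd : d ≠ 0) (hL : L ≠ 0) :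
    ai * (Pe * (-μ)) / d = -(ai * (L * Pe) / d * (μ / L)) := by
  field_simp

private lemma staeckel_aux3 (r b c u w : ℝ) : r / 4 * (b / u * (c / w)) = b * c / 4 * (r / (u * w)) := by
  ring

end Aux

/-- Stäckel form of the kinetic energy of the geodesic flow on the ellipsoid in
ellipsoidal coordinates: with `xᵢ(t) = √ρᵢ(t)`,
`(1/2) Σᵢ ẋᵢ² = −(1/8) Σₖ [∏_{j≠k}(λₖ−λⱼ) / ∏ⱼ(λₖ−aⱼ)] λₖ λ̇ₖ²`. -/
theorem staeckel_energy_form (n : ℕ) (hn : 1 ≤ n)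
    (a : Fin (n + 1) → ℝ) (ha_pos : ∀ i, 0 < a i) (ha_inj : Function.Injective a)
    (p q : ℝ) (lam lamdot : Fin n → ℝ → ℝ) (x xdot : Fin (n + 1) → ℝ → ℝ)
    (hlam_distinct : ∀ t ∈ Set.Ioo p q, ∀ k l : Fin n, k ≠ l → lam k t ≠ lam l t)
    (hlam_ne_a : ∀ t ∈ Set.Ioo p q, ∀ k : Fin n, ∀ j : Fin (n + 1), lam k t ≠ a j)
    (hrho_pos : ∀ t ∈ Set.Ioo p q, ∀ i : Fin (n + 1),
      0 < a i * (∏ k, (a i - lam k t)) / (∏ j ∈ univ.erase i, (a i - a j)))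
    (hx : ∀ t : ℝ, ∀ i : Fin (n + 1), x i t =
      Real.sqrt (a i * (∏ k, (a i - lam k t)) / (∏ j ∈ univ.erase i, (a i - a j))))
    (hlam_deriv : ∀ t ∈ Set.Ioo p q, ∀ k : Fin n, HasDerivAt (lam k) (lamdot k t) t)
    (hx_deriv : ∀ t ∈ Set.Ioo p q, ∀ i : Fin (n + 1), HasDerivAt (x i) (xdot i t) t) :
    ∀ t ∈ Set.Ioo p q,
      (1 / 2) * ∑ i, (xdot i t) ^ 2 =
        -(1 / 8) * ∑ k, ((∏ j ∈ univ.erase k, (lam k t - lam j t)) /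
          (∏ j, (lam k t - a j))) * lam k t * (lamdot k t) ^ 2 := by
  intro t ht
  have haL : ∀ (i : Fin (n + 1)) (k : Fin n), a i - lam k t ≠ 0 :=
    fun i k => sub_ne_zero.mpr (Ne.symm (hlam_ne_a t ht k i))
  have hD0 : ∀ i : Fin (n + 1), (∏ j ∈ univ.erase i, (a i - a j)) ≠ 0 := by
    intro i
    rw [Finset.prod_ne_zero_iff]
    intro j hj
    exact sub_ne_zero.mpr fun h => (mem_erase.mp hj).1 (ha_inj h.symm)
  have hρpos := hrho_pos t ht
  -- Step 1: formula for xdot.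
  have hxdot : ∀ i : Fin (n + 1),
      xdot i t = (1 / (2 * Real.sqrt (a i * (∏ k, (a i - lam k t)) /
          (∏ j ∈ univ.erase i, (a i - a j))))) *
        (a i * (∑ k, (∏ m ∈ univ.erase k, (a i - lam m t)) * (-(lamdot k t))) /
          (∏ j ∈ univ.erase i, (a i - a j))) := by
    intro i
    have hprod : HasDerivAt (fun s => ∏ k, (a i - lam k s))
        (∑ k, (∏ m ∈ univ.erase k, (a i - lam m t)) * (-(lamdot k t))) t := by
      have := HasDerivAt.fun_finsetProd (u := univ) (f := fun k s => a i - lam k s)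
        (f' := fun k => -(lamdot k t)) (x := t)
        (fun k _ => (hlam_deriv t ht k).const_sub (a i))
      simpa [smul_eq_mul] using this
    have hρ : HasDerivAt (fun s => a i * (∏ k, (a i - lam k s)) /
        (∏ j ∈ univ.erase i, (a i - a j)))
        (a i * (∑ k, (∏ m ∈ univ.erase k, (a i - lam m t)) * (-(lamdot k t))) /
          (∏ j ∈ univ.erase i, (a i - a j))) t :=
      (hprod.const_mul (a i)).div_const _
    have hs := (Real.hasDerivAt_sqrt (ne_of_gt (hρpos i))).comp t hρ
    have hxf : x i = fun s => Real.sqrt (a i * (∏ k, (a i - lam k s)) /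
        (∏ j ∈ univ.erase i, (a i - a j))) := funext fun s => hx s i
    refine (hx_deriv t ht i).unique ?_
    rw [hxf]
    exact hs
  -- Step 2: squared velocity.
  have hsq : ∀ i : Fin (n + 1),
      (xdot i t) ^ 2 = (a i * (∏ k, (a i - lam k t)) / (∏ j ∈ univ.erase i, (a i - a j)) / 4) *
        (∑ k, lamdot k t / (a i - lam k t)) ^ 2 := by
    intro i
    rw [hxdot i]
    have hρ' : a i * (∑ k, (∏ m ∈ univ.erase k, (a i - lam m t)) * (-(lamdot k t))) /
        (∏ j ∈ univ.erase i, (a i - a j)) =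
        -((a i * (∏ k, (a i - lam k t)) / (∏ j ∈ univ.erase i, (a i - a j))) *
          ∑ k, lamdot k t / (a i - lam k t)) := by
      rw [Finset.mul_sum, Finset.sum_div, Finset.mul_sum, ← Finset.sum_neg_distrib]
      refine Finset.sum_congr rfl fun k _ => ?_
      have hsplit : (∏ m, (a i - lam m t)) =
          (a i - lam k t) * ∏ m ∈ univ.erase k, (a i - lam m t) :=
        (Finset.mul_prod_erase _ _ (mem_univ k)).symm
      rw [hsplit]
      exact staeckel_aux2 _ _ _ _ _ (hD0 i) (haL i k)
    rw [hρ']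
    have h1 : Real.sqrt (a i * (∏ k, (a i - lam k t)) /
        (∏ j ∈ univ.erase i, (a i - a j))) ^ 2 =
        a i * (∏ k, (a i - lam k t)) / (∏ j ∈ univ.erase i, (a i - a j)) :=
      Real.sq_sqrt (hρpos i).le
    have h2 : Real.sqrt (a i * (∏ k, (a i - lam k t)) /
        (∏ j ∈ univ.erase i, (a i - a j))) ≠ 0 :=
      ne_of_gt (Real.sqrt_pos.mpr (hρpos i))
    have hρ0 : a i * (∏ k, (a i - lam k t)) / (∏ j ∈ univ.erase i, (a i - a j)) ≠ 0 :=
      ne_of_gt (hρpos i)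
    have hexp : (1 / (2 * Real.sqrt (a i * (∏ k, (a i - lam k t)) /
          (∏ j ∈ univ.erase i, (a i - a j)))) *
        -((a i * (∏ k, (a i - lam k t)) / (∏ j ∈ univ.erase i, (a i - a j))) *
          ∑ k, lamdot k t / (a i - lam k t))) ^ 2 =
        (a i * (∏ k, (a i - lam k t)) / (∏ j ∈ univ.erase i, (a i - a j))) ^ 2 *
          (∑ k, lamdot k t / (a i - lam k t)) ^ 2 /
          (4 * Real.sqrt (a i * (∏ k, (a i - lam k t)) /
            (∏ j ∈ univ.erase i, (a i - a j))) ^ 2) := by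
      ring
    rw [hexp, h1]
    exact staeckel_aux1 _ _ hρ0
  -- Step 3: expand the square as a double sum and sum over i.
  have hbig : ∑ i, (xdot i t) ^ 2 =
      ∑ k, ∑ l, ∑ i, (a i * (∏ m, (a i - lam m t)) /
        (∏ j ∈ univ.erase i, (a i - a j)) / 4) *
        (lamdot k t / (a i - lam k t) * (lamdot l t / (a i - lam l t))) := by
    rw [Finset.sum_congr rfl fun i _ => hsq i]
    have hexpand : ∀ i : Fin (n + 1),
        (a i * (∏ m, (a i - lam m t)) / (∏ j ∈ univ.erase i, (a i - a j)) / 4) *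
          (∑ k, lamdot k t / (a i - lam k t)) ^ 2 =
        ∑ k, ∑ l, (a i * (∏ m, (a i - lam m t)) / (∏ j ∈ univ.erase i, (a i - a j)) / 4) *
          (lamdot k t / (a i - lam k t) * (lamdot l t / (a i - lam l t))) := by
      intro i
      rw [sq, Finset.sum_mul_sum]
      simp only [Finset.mul_sum]
    rw [Finset.sum_congr rfl fun i _ => hexpand i, Finset.sum_comm]
    exact Finset.sum_congr rfl fun k _ => Finset.sum_comm
  -- Step 4: evaluate the inner sums using the residue identities.
  have hLA : ∀ (k : Fin n) (j : Fin (n + 1)), lam k t ≠ a j := hlam_ne_a t ht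
  have hinner : ∀ k : Fin n,
      ∑ l, ∑ i, (a i * (∏ m, (a i - lam m t)) /
        (∏ j ∈ univ.erase i, (a i - a j)) / 4) *
        (lamdot k t / (a i - lam k t) * (lamdot l t / (a i - lam l t))) =
      (lamdot k t) ^ 2 / 4 *
        -(lam k t * (∏ m ∈ univ.erase k, (lam k t - lam m t)) / ∏ j, (lam k t - a j)) := by
    intro k
    have hterm : ∀ l : Fin n,
        ∑ i, (a i * (∏ m, (a i - lam m t)) / (∏ j ∈ univ.erase i, (a i - a j)) / 4) *
          (lamdot k t / (a i - lam k t) * (lamdot l t / (a i - lam l t))) =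
        (lamdot k t * lamdot l t / 4) *
          ∑ i, (a i * (∏ m, (a i - lam m t)) / (∏ j ∈ univ.erase i, (a i - a j))) /
            ((a i - lam k t) * (a i - lam l t)) := by
      intro l
      rw [Finset.mul_sum]
      refine Finset.sum_congr rfl fun i _ => ?_
      exact staeckel_aux3 _ _ _ _ _
    rw [Finset.sum_congr rfl fun l _ => hterm l]
    rw [Finset.sum_eq_single k (fun l _ hlk => by
      rw [staeckel_ident_offdiag a ha_inj (fun m => lam m t) hLA (Ne.symm hlk), mul_zero])
      (fun h => absurd (mem_univ k) h)]
    have hdiag : ∑ i, (a i * (∏ m, (a i - lam m t)) /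
        (∏ j ∈ univ.erase i, (a i - a j))) / ((a i - lam k t) * (a i - lam k t)) =
        -(lam k t * (∏ m ∈ univ.erase k, (lam k t - lam m t)) / ∏ j, (lam k t - a j)) := by
      rw [← staeckel_ident_diag a ha_inj (fun m => lam m t) hLA k]
      exact Finset.sum_congr rfl fun i _ => by rw [sq]
    rw [hdiag]
    ring
  rw [hbig, Finset.sum_congr rfl fun k _ => hinner k, Finset.mul_sum, Finset.mul_sum]
  exact Finset.sum_congr rfl fun k _ => by ring
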